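/- Let c > 0, Λ0 ∈ SO(3), and M a real 3×3 matrix. Define L(ε) = c Λ0 + ε M for ε ∈ ℝ. Suppose S : ℝ → ℝ^{3×3} is differentiable at 0 and satisfies, for all ε in a neighborhood of 0, that S(ε) is symmetric positive semidefinite and S(ε)·S(ε) = L(ε)ᵀ L(ε). Then S(0) = c·I, the map ε ↦ L(ε) (S(ε))⁻¹ is differentiable at ε = 0, and its derivative at 0 equals c⁻¹ · (1/2)(M − Λ0 Mᵀ Λ0) = c⁻¹ P_{T_{Λ0}}(M). (This is the first-variation formula d/dε|_{ε=0} Λ[f0 + ε f1] = (c1 ρ0)⁻¹ P_{T_{Λ0}}(λ[f1]) for the polar-decomposition orthogonal factor, with c = c1 ρ0 and M = λ[f1].) -/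

import Mathlib

open Matrix

/-- `SO3 A` means `A` is a real 3×3 special orthogonal matrix. -/
def SO3 (A : Matrix (Fin 3) (Fin 3) ℝ) : Prop :=
  Aᵀ * A = 1 ∧ A.det = 1

attribute [local instance] Matrix.normedAddCommGroup Matrix.normedSpace

noncomputable section AuxPolar

abbrev Mat3 := Matrix (Fin 3) (Fin 3) ℝ

/-- Matrix multiplication as a continuous bilinear map. -/
noncomputable def mulCLM : Mat3 →L[ℝ] Mat3 →L[ℝ] Mat3 :=
  LinearMap.toContinuousLinearMap
    ((LinearMap.toContinuousLinearMap :
        (Mat3 →ₗ[ℝ] Mat3) ≃ₗ[ℝ] (Mat3 →L[ℝ] Mat3)).toLinearMap ∘ₗ LinearMap.mul ℝ Mat3)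

@[simp] lemma mulCLM_apply (A B : Mat3) : mulCLM A B = A * B := rfl

lemma HasDerivAt.matMul {f g : ℝ → Mat3} {f' g' : Mat3} {x : ℝ}
    (hf : HasDerivAt f f' x) (hg : HasDerivAt g g' x) :
    HasDerivAt (fun y => f y * g y) (f' * g x + f x * g') x := by
  have h1 := mulCLM.hasDerivAt_of_bilinear (fun _ => hf) (fun _ => hg)
  rw [add_comm]
  exact h1

noncomputable def traceCLM : Mat3 →L[ℝ] ℝ :=
  LinearMap.toContinuousLinearMap (Matrix.traceLinearMap (Fin 3) ℝ ℝ)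

@[simp] lemma traceCLM_apply (A : Mat3) : traceCLM A = A.trace := rfl

lemma HasDerivAt.matTrace {f : ℝ → Mat3} {f' : Mat3} {x : ℝ} (hf : HasDerivAt f f' x) :
    HasDerivAt (fun y => (f y).trace) f'.trace x :=
  traceCLM.hasFDerivAt.comp_hasDerivAt x hf

lemma det_eq_traces (A : Mat3) :
    A.det = ((A.trace)^3 - 3 * A.trace * (A*A).trace + 2 * (A*A*A).trace) / 6 := by
  simp [Matrix.det_fin_three, Matrix.trace_fin_three, Matrix.mul_apply, Fin.sum_univ_three]
  ring

lemma cayley3 (A : Mat3) :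
    A * (A*A - A.trace • A + (((A.trace)^2 - (A*A).trace)/2) • 1) = A.det • 1 := by
  ext i j
  fin_cases i <;> fin_cases j <;>
    simp [Matrix.det_fin_three, Matrix.trace_fin_three, Matrix.mul_apply,
      Fin.sum_univ_three, Matrix.one_apply] <;> ring

end AuxPolar

/-- first variation of the polar-decomposition orthogonal factor.
Let `L ε = c Λ0 + ε M` and let `S ε` be symmetric positive semidefinite with
`S(ε)·S(ε) = L(ε)ᵀ L(ε)` near `ε = 0`, `S` differentiable at `0`.  Then `S 0 = c·I`,
`ε ↦ L(ε) (S ε)⁻¹` is differentiable at `0`, and its derivative at `0` equals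
`c⁻¹ P_{T_{Λ0}}(M) = c⁻¹ (1/2)(M − Λ0 Mᵀ Λ0)`. -/
theorem statement3 (c : ℝ) (hc : 0 < c) (Λ0 M : Matrix (Fin 3) (Fin 3) ℝ)
    (hΛ0 : SO3 Λ0) (S : ℝ → Matrix (Fin 3) (Fin 3) ℝ)
    (hSdiff : DifferentiableAt ℝ S 0)
    (hS : ∀ᶠ ε in nhds (0 : ℝ), (S ε).PosSemidef ∧
      S ε * S ε = (c • Λ0 + ε • M)ᵀ * (c • Λ0 + ε • M)) :
    S 0 = c • (1 : Matrix (Fin 3) (Fin 3) ℝ) ∧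
    DifferentiableAt ℝ (fun ε : ℝ => (c • Λ0 + ε • M) * (S ε)⁻¹) 0 ∧
    deriv (fun ε : ℝ => (c • Λ0 + ε • M) * (S ε)⁻¹) 0
      = c⁻¹ • ((1 / 2 : ℝ) • (M - Λ0 * Mᵀ * Λ0)) := by
  obtain ⟨horth, hdet⟩ := hΛ0
  have hΛΛt : Λ0 * Λ0ᵀ = 1 := mul_eq_one_comm.mp horth
  have hc0 : c ≠ 0 := ne_of_gt hc
  -- the value S 0
  have h00 := hS.self_of_nhds
  have hsq0 : S 0 * S 0 = (c ^ 2) • (1 : Mat3) := by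
    have := h00.2
    simp only [zero_smul, add_zero, Matrix.transpose_smul] at this
    rw [this, Matrix.smul_mul, Matrix.mul_smul, horth, smul_smul]
    ring_nf
  have hcI : ((c : ℝ) • (1 : Mat3)).PosSemidef := by
    rw [smul_one_eq_diagonal]
    exact Matrix.PosSemidef.diagonal fun i => le_of_lt hc
  have hS0 : S 0 = c • (1 : Mat3) := by
    have hpd : (S 0 + c • (1 : Mat3)).PosDef :=
      Matrix.PosDef.posSemidef_add h00.1 (Matrix.PosDef.one.smul hc)
    have hz : (S 0 + c • (1 : Mat3)) * (S 0 - c • (1 : Mat3)) = 0 := by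
      rw [Matrix.add_mul, Matrix.mul_sub, Matrix.mul_sub, hsq0]
      simp only [Matrix.smul_mul, Matrix.mul_smul, Matrix.one_mul, Matrix.mul_one, smul_smul]
      module
    exact sub_eq_zero.mp ((hpd.isUnit.mul_right_eq_zero).mp hz)
  refine ⟨hS0, ?_⟩
  -- derivative of S
  set D : Mat3 := deriv S 0 with hD
  have hd : HasDerivAt S D 0 := hSdiff.hasDerivAt
  -- derivative of L
  have hL : HasDerivAt (fun ε : ℝ => c • Λ0 + ε • M) M 0 := by
    have h := ((hasDerivAt_id (0:ℝ)).smul_const M).const_add (c • Λ0)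
    rw [one_smul] at h
    exact h
  have hLt : HasDerivAt (fun ε : ℝ => (c • Λ0 + ε • M)ᵀ) Mᵀ 0 := by
    have h : (fun ε : ℝ => (c • Λ0 + ε • M)ᵀ) = fun ε : ℝ => c • Λ0ᵀ + ε • Mᵀ := by
      funext ε; rw [Matrix.transpose_add, Matrix.transpose_smul, Matrix.transpose_smul]
    rw [h]
    have h := ((hasDerivAt_id (0:ℝ)).smul_const Mᵀ).const_add (c • Λ0ᵀ)
    rw [one_smul] at h
    exact h
  -- identify D
  have hDval : D = (1/2 : ℝ) • (Mᵀ * Λ0 + Λ0ᵀ * M) := by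
    have hA : HasDerivAt (fun ε => S ε * S ε) (D * S 0 + S 0 * D) 0 := hd.matMul hd
    have hB : HasDerivAt (fun ε : ℝ => (c • Λ0 + ε • M)ᵀ * (c • Λ0 + ε • M))
        (Mᵀ * (c • Λ0 + (0:ℝ) • M) + (c • Λ0 + (0:ℝ) • M)ᵀ * M) 0 := hLt.matMul hL
    have heq : (fun ε => S ε * S ε)
        =ᶠ[nhds (0:ℝ)] (fun ε : ℝ => (c • Λ0 + ε • M)ᵀ * (c • Λ0 + ε • M)) :=
      hS.mono fun ε h => h.2
    have hA' : HasDerivAt (fun ε : ℝ => (c • Λ0 + ε • M)ᵀ * (c • Λ0 + ε • M))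
        (D * S 0 + S 0 * D) 0 := (heq.hasDerivAt_iff).mp hA
    have huniq := hA'.unique hB
    rw [hS0] at huniq
    simp only [zero_smul, add_zero, Matrix.transpose_smul, Matrix.mul_smul, Matrix.smul_mul,
      Matrix.mul_one, Matrix.one_mul] at huniq
    have h2 : (2*c) • D = c • (Mᵀ * Λ0 + Λ0ᵀ * M) := by
      rw [smul_add]
      rw [← huniq]
      module
    have := congrArg (fun X => ((2*c)⁻¹ : ℝ) • X) h2
    simp only [smul_smul] at this
    rw [inv_mul_cancel₀ (by positivity), one_smul] at this
    rw [this]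
    have h3 : ((2*c)⁻¹ * c) = 1/2 := by field_simp
    rw [h3]
  -- the correction matrix G
  set t : ℝ → ℝ := fun ε => (S ε).trace with ht
  set t2 : ℝ → ℝ := fun ε => (S ε * S ε).trace with ht2
  set t3 : ℝ → ℝ := fun ε => (S ε * S ε * S ε).trace with ht3
  set dfun : ℝ → ℝ := fun ε => ((t ε)^3 - 3 * t ε * t2 ε + 2 * t3 ε) / 6 with hdfun
  have hdfun_det : ∀ ε, dfun ε = (S ε).det := fun ε => (det_eq_traces (S ε)).symm
  set G : ℝ → Mat3 := fun ε =>
    (dfun ε)⁻¹ • (S ε * S ε - t ε • S ε + (((t ε)^2 - t2 ε)/2) • 1) with hG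
  -- differentiability ingredients
  have hdt : DifferentiableAt ℝ t 0 := (hd.matTrace).differentiableAt
  have hdt2 : DifferentiableAt ℝ t2 0 := ((hd.matMul hd).matTrace).differentiableAt
  have hdt3 : DifferentiableAt ℝ t3 0 := (((hd.matMul hd).matMul hd).matTrace).differentiableAt
  have hddfun : DifferentiableAt ℝ dfun 0 := by
    apply DifferentiableAt.div_const
    exact ((hdt.pow 3).sub ((differentiableAt_const (3:ℝ)).mul hdt |>.mul hdt2)).add
      ((differentiableAt_const (2:ℝ)).mul hdt3)
  have hdfun0 : dfun 0 = c ^ 3 := by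
    rw [hdfun_det 0, hS0, smul_one_eq_diagonal, Matrix.det_diagonal, Fin.prod_univ_three]
    ring
  have hdfun_ne : ∀ᶠ ε in nhds (0:ℝ), dfun ε ≠ 0 := by
    have : ContinuousAt dfun 0 := hddfun.continuousAt
    apply this.eventually_ne
    rw [hdfun0]
    positivity
  have hdG : DifferentiableAt ℝ G 0 := by
    apply DifferentiableAt.fun_smul
    · exact hddfun.inv (by rw [hdfun0]; positivity)
    · exact (((hd.matMul hd).differentiableAt.sub (hdt.smul hSdiff)).add
        ((((hdt.pow 2).sub hdt2).div_const 2).smul (differentiableAt_const (1 : Mat3))))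
  -- eventually (S ε)⁻¹ = G ε
  have hinv_eq : ∀ᶠ ε in nhds (0:ℝ), (S ε)⁻¹ = G ε := by
    filter_upwards [hdfun_ne] with ε hne
    have hdet' : (S ε).det ≠ 0 := by rw [← hdfun_det]; exact hne
    apply Matrix.inv_eq_right_inv
    rw [hG]
    rw [Matrix.mul_smul, cayley3 (S ε), ← hdfun_det, smul_smul, inv_mul_cancel₀ hne, one_smul]
  -- the function L * G and its eventual equality
  have hfeq : (fun ε : ℝ => (c • Λ0 + ε • M) * (S ε)⁻¹)
      =ᶠ[nhds (0:ℝ)] (fun ε : ℝ => (c • Λ0 + ε • M) * G ε) := by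
    filter_upwards [hinv_eq] with ε h; rw [h]
  have hdΛG : DifferentiableAt ℝ (fun ε : ℝ => (c • Λ0 + ε • M) * G ε) 0 :=
    (hL.matMul hdG.hasDerivAt).differentiableAt
  have hdiff : DifferentiableAt ℝ (fun ε : ℝ => (c • Λ0 + ε • M) * (S ε)⁻¹) 0 :=
    hfeq.differentiableAt_iff.mpr hdΛG
  refine ⟨hdiff, ?_⟩
  -- compute the derivative via Λ(ε) S(ε) = L(ε)
  set Λf : ℝ → Mat3 := fun ε : ℝ => (c • Λ0 + ε • M) * G ε with hΛf
  set Λ' : Mat3 := deriv Λf 0 with hΛ'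
  have hΛd : HasDerivAt Λf Λ' 0 := hdΛG.hasDerivAt
  have hmulcc : ((c:ℝ) • (1:Mat3)) * ((c:ℝ) • (1:Mat3)) = (c^2) • 1 := by
    rw [Matrix.smul_mul, Matrix.mul_smul, Matrix.one_mul, smul_smul]
    ring_nf
  have htr1 : Matrix.trace (1 : Mat3) = 3 := by
    simp [Matrix.trace_one]
  have ht0 : t 0 = 3 * c := by
    rw [ht]; simp only [hS0, Matrix.trace_smul, htr1, smul_eq_mul]; ring
  have ht20 : t2 0 = 3 * c^2 := by
    rw [ht2]; simp only [hS0, hmulcc, Matrix.trace_smul, htr1, smul_eq_mul]; ring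
  have hG0 : G 0 = c⁻¹ • (1 : Mat3) := by
    rw [hG]
    simp only [ht0, ht20, hdfun0, hS0, hmulcc, smul_smul]
    rw [← sub_smul, ← add_smul, smul_smul]
    congr 1
    field_simp
    ring
  have hΛf0 : Λf 0 = Λ0 := by
    rw [hΛf]
    simp only [zero_smul, add_zero, hG0]
    rw [Matrix.mul_smul, Matrix.smul_mul, Matrix.mul_one, smul_smul, inv_mul_cancel₀ hc0,
      one_smul]
  -- eventually Λf ε * S ε = L ε
  have hprod : (fun ε => Λf ε * S ε) =ᶠ[nhds (0:ℝ)] (fun ε : ℝ => c • Λ0 + ε • M) := by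
    filter_upwards [hdfun_ne, hinv_eq] with ε hne hGe
    have hdet' : IsUnit (S ε).det := by
      rw [← hdfun_det]; exact (isUnit_iff_ne_zero).mpr hne
    have hfe : Λf ε = (c • Λ0 + ε • M) * G ε := rfl
    rw [hfe, ← hGe, Matrix.mul_assoc, Matrix.nonsing_inv_mul _ hdet', Matrix.mul_one]
  have hPd : HasDerivAt (fun ε => Λf ε * S ε) (Λ' * S 0 + Λf 0 * D) 0 := hΛd.matMul hd
  have hPd' : HasDerivAt (fun ε : ℝ => c • Λ0 + ε • M) (Λ' * S 0 + Λf 0 * D) 0 :=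
    (hprod.hasDerivAt_iff).mp hPd
  have hkey : Λ' * S 0 + Λf 0 * D = M := hPd'.unique hL
  rw [hS0, hΛf0] at hkey
  have hΛ'val : Λ' = c⁻¹ • (M - Λ0 * D) := by
    have h1 : c • Λ' = M - Λ0 * D := by
      rw [← hkey]
      rw [Matrix.mul_smul, Matrix.mul_one]
      abel
    have h2 := congrArg (fun X => (c⁻¹ : ℝ) • X) h1
    simp only [smul_smul, inv_mul_cancel₀ hc0, one_smul] at h2
    exact h2
  -- final algebra
  have hfinal : Λ' = c⁻¹ • ((1 / 2 : ℝ) • (M - Λ0 * Mᵀ * Λ0)) := by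
    rw [hΛ'val, hDval]
    have : Λ0 * ((1/2 : ℝ) • (Mᵀ * Λ0 + Λ0ᵀ * M)) =
        (1/2 : ℝ) • (Λ0 * Mᵀ * Λ0 + M) := by
      rw [Matrix.mul_smul]
      congr 1
      rw [Matrix.mul_add]
      congr 1
      · rw [← Matrix.mul_assoc]
      · rw [← Matrix.mul_assoc, hΛΛt, Matrix.one_mul]
    rw [this]
    congr 1
    module
  rw [← hfinal]
  exact hfeq.deriv_eq.trans rfl
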